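/- Let w be a synaptic kernel, f and g an activation function and a learning modulation function, γ ≥ 0, and ρ > 0. Then the operator A defined by (Au)(x,t) = ∫_0^t [ −u(x,s) + ∫_{ℝ^m} w(x,y)(1 + γ g(u(x,s) − u(y,s))) f(u(y,s)) dy ] ds maps the Banach space X_ρ = C_b(ℝ^m × [0,ρ]) of bounded continuous functions on ℝ^m × [0,ρ] into itself; in particular, for every u ∈ X_ρ and fixed x, the map t ↦ (Au)(x,t) is continuous on [0,ρ]. -/

import Mathlib

open MeasureTheory Set

/-- The operator `A`, `(Au)(x,t) = ∫₀ᵗ [-u(x,s) + ∫ w x y (1 + γ g(u x s - u y s)) f(u y s) dy] ds`. -/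
noncomputable def Aop {m : ℕ} (w : (Fin m → ℝ) → (Fin m → ℝ) → ℝ) (f g : ℝ → ℝ)
    (γ : ℝ) (u : (Fin m → ℝ) → ℝ → ℝ) (x : Fin m → ℝ) (t : ℝ) : ℝ :=
  ∫ s in (0:ℝ)..t, (-(u x s) + ∫ y, w x y * (1 + γ * g (u x s - u y s)) * f (u y s))

set_option maxHeartbeats 2000000 in
/-- the operator `A` maps `X_ρ = C_b(ℝ^m × [0,ρ])` into itself; in
particular, for every `u ∈ X_ρ` and fixed `x`, the map `t ↦ (Au)(x,t)` is continuous
on `[0,ρ]`. -/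
theorem stmt_4 {m : ℕ} (hm : 1 ≤ m)
    (w : (Fin m → ℝ) → (Fin m → ℝ) → ℝ)
    (Cinf Cw Kw : ℝ) (hCw : 0 < Cw) (hKw : 0 < Kw)
    (hw_meas : Measurable (Function.uncurry w))
    (hw_bdd : ∀ x y, |w x y| ≤ Cinf)
    (hw_int : ∀ x, Integrable fun y => w x y)
    (hw_L1 : ∀ x, (∫ y, |w x y|) ≤ Cw)
    (hw_lip : ∀ x x', (∫ y, |w x y - w x' y|) ≤ Kw * ‖x - x'‖)
    (f g : ℝ → ℝ)
    (hf_smooth : ContDiff ℝ 1 f) (hf_deriv : ∃ B, ∀ s, |deriv f s| ≤ B)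
    (hf_range : ∀ s, 0 ≤ f s ∧ f s ≤ 1)
    (hg_smooth : ContDiff ℝ 1 g) (hg_deriv : ∃ B, ∀ s, |deriv g s| ≤ B)
    (hg_range : ∀ s, 0 ≤ g s ∧ g s ≤ 1)
    (γ : ℝ) (hγ : 0 ≤ γ)
    (ρ : ℝ) (hρ : 0 < ρ)
    (u : (Fin m → ℝ) → ℝ → ℝ)
    (hu_meas : Measurable (Function.uncurry u))
    (hu_cont : ContinuousOn (fun p : (Fin m → ℝ) × ℝ => u p.1 p.2) (univ ×ˢ Icc 0 ρ))
    (hu_bdd : ∃ M, ∀ (x : Fin m → ℝ), ∀ t ∈ Icc (0:ℝ) ρ, |u x t| ≤ M) :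
    ContinuousOn (fun p : (Fin m → ℝ) × ℝ => Aop w f g γ u p.1 p.2) (univ ×ˢ Icc 0 ρ) ∧
    (∃ M, ∀ (x : Fin m → ℝ), ∀ t ∈ Icc (0:ℝ) ρ, |Aop w f g γ u x t| ≤ M) ∧
    (∀ x : Fin m → ℝ, ContinuousOn (fun t => Aop w f g γ u x t) (Icc 0 ρ)) := by
  classical
  obtain ⟨M, hM⟩ := hu_bdd
  obtain ⟨Bg, hBg⟩ := hg_deriv
  have hM0 : 0 ≤ M := (abs_nonneg _).trans (hM 0 0 ⟨le_rfl, hρ.le⟩)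
  have hBg0 : 0 ≤ Bg := (abs_nonneg _).trans (hBg 0)
  have hγ1 : (0:ℝ) < 1 + γ := by linarith
  have hfm : Measurable f := hf_smooth.continuous.measurable
  have hgm : Measurable g := hg_smooth.continuous.measurable
  -- g is Bg-Lipschitz
  have hg_lip : ∀ a b : ℝ, |g a - g b| ≤ Bg * |a - b| := by
    intro a b
    have := Convex.norm_image_sub_le_of_norm_deriv_le
      (f := g) (s := (univ : Set ℝ))
      (fun z _ => (hg_smooth.differentiable one_ne_zero).differentiableAt)
      (fun z _ => by simpa only [Real.norm_eq_abs] using hBg z)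
      convex_univ (mem_univ b) (mem_univ a)
    simpa only [Real.norm_eq_abs] using this
  -- local notation for the inner integral and the integrand of Aop
  set G : (Fin m → ℝ) → ℝ → ℝ :=
    fun x s => ∫ y, w x y * (1 + γ * g (u x s - u y s)) * f (u y s) with hGdef
  set F : (Fin m → ℝ) → ℝ → ℝ := fun x s => -(u x s) + G x s with hFdef
  have hAeq : ∀ x t, Aop w f g γ u x t = ∫ s in (0:ℝ)..t, F x s := by
    intro x t
    simp only [hFdef, hGdef, Aop]
  -- pointwise bound on the integrand
  have hptw : ∀ c a b : ℝ, |c * (1 + γ * g a) * f b| ≤ (1 + γ) * |c| := by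
    intro c a b
    rw [abs_mul, abs_mul]
    have hga := hg_range a
    have hfa := hf_range b
    have e1 : |1 + γ * g a| ≤ 1 + γ := by
      rw [abs_of_nonneg (by nlinarith)]; nlinarith
    have e2 : |f b| ≤ 1 := by rw [abs_of_nonneg hfa.1]; exact hfa.2
    calc |c| * |1 + γ * g a| * |f b| ≤ |c| * (1 + γ) * 1 :=
        mul_le_mul (mul_le_mul_of_nonneg_left e1 (abs_nonneg c)) e2 (abs_nonneg _)
          (by positivity)
      _ = (1 + γ) * |c| := by ring
  -- measurability in y
  have hmy : ∀ (x xg : Fin m → ℝ) (s : ℝ),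
      Measurable fun y => w x y * (1 + γ * g (u xg s - u y s)) * f (u y s) := by
    intro x xg s
    have h1 : Measurable fun y : Fin m → ℝ => w x y :=
      hw_meas.comp (measurable_const.prodMk measurable_id)
    have h2 : Measurable fun y : Fin m → ℝ => u y s :=
      hu_meas.comp (measurable_id.prodMk measurable_const)
    exact (h1.mul (measurable_const.add
      ((hgm.comp (measurable_const.sub h2)).const_mul γ))).mul (hfm.comp h2)
  -- integrability in y
  have hint : ∀ (x xg : Fin m → ℝ) (s : ℝ),
      Integrable fun y => w x y * (1 + γ * g (u xg s - u y s)) * f (u y s) := by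
    intro x xg s
    refine Integrable.mono' ((hw_int x).abs.const_mul (1 + γ))
      (hmy x xg s).aestronglyMeasurable ?_
    exact Filter.Eventually.of_forall fun y => by
      simpa only [Real.norm_eq_abs] using hptw (w x y) (u xg s - u y s) (u y s)
  -- bound on the inner integral
  have hGb : ∀ x s, |G x s| ≤ (1 + γ) * Cw := by
    intro x s
    have h1 : |G x s| ≤ ∫ y, (1 + γ) * |w x y| := by
      simp only [hGdef]
      rw [← Real.norm_eq_abs]
      refine (norm_integral_le_integral_norm _).trans ?_
      refine integral_mono (hint x x s).norm ((hw_int x).abs.const_mul (1 + γ)) fun y => ?_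
      simpa only [Real.norm_eq_abs] using hptw (w x y) (u x s - u y s) (u y s)
    calc |G x s| ≤ ∫ y, (1 + γ) * |w x y| := h1
      _ = (1 + γ) * ∫ y, |w x y| := integral_const_mul _ _
      _ ≤ (1 + γ) * Cw := mul_le_mul_of_nonneg_left (hw_L1 x) hγ1.le
  -- main estimate: difference of inner integrals
  have hGdiff : ∀ x x' s, |G x s - G x' s| ≤
      (1 + γ) * (Kw * ‖x - x'‖) + γ * Bg * Cw * |u x s - u x' s| := by
    intro x x' s
    have I1 : Integrable fun y =>
        (w x y - w x' y) * (1 + γ * g (u x s - u y s)) * f (u y s) :=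
      ((hint x x s).sub (hint x' x s)).congr (Filter.Eventually.of_forall fun y => by
        simp only [Pi.sub_apply]; ring)
    have I2 : Integrable fun y =>
        w x' y * (γ * (g (u x s - u y s) - g (u x' s - u y s))) * f (u y s) :=
      ((hint x' x s).sub (hint x' x' s)).congr (Filter.Eventually.of_forall fun y => by
        simp only [Pi.sub_apply]; ring)
    have split : G x s - G x' s =
        (∫ y, (w x y - w x' y) * (1 + γ * g (u x s - u y s)) * f (u y s))
        + ∫ y, w x' y * (γ * (g (u x s - u y s) - g (u x' s - u y s))) * f (u y s) := by
      simp only [hGdef]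
      rw [← integral_sub (hint x x s) (hint x' x' s), ← integral_add I1 I2]
      congr 1
      funext y
      ring
    have b1 : |∫ y, (w x y - w x' y) * (1 + γ * g (u x s - u y s)) * f (u y s)| ≤
        (1 + γ) * (Kw * ‖x - x'‖) := by
      have h1 : |∫ y, (w x y - w x' y) * (1 + γ * g (u x s - u y s)) * f (u y s)| ≤
          ∫ y, (1 + γ) * |w x y - w x' y| := by
        rw [← Real.norm_eq_abs]
        refine (norm_integral_le_integral_norm _).trans ?_
        refine integral_mono I1.norm (((hw_int x).sub (hw_int x')).abs.const_mul (1 + γ))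
          fun y => ?_
        simpa only [Real.norm_eq_abs] using hptw (w x y - w x' y) (u x s - u y s) (u y s)
      calc |∫ y, (w x y - w x' y) * (1 + γ * g (u x s - u y s)) * f (u y s)|
          ≤ ∫ y, (1 + γ) * |w x y - w x' y| := h1
        _ = (1 + γ) * ∫ y, |w x y - w x' y| := integral_const_mul _ _
        _ ≤ (1 + γ) * (Kw * ‖x - x'‖) := mul_le_mul_of_nonneg_left (hw_lip x x') hγ1.le
    have b2 : |∫ y, w x' y * (γ * (g (u x s - u y s) - g (u x' s - u y s))) * f (u y s)| ≤
        γ * Bg * Cw * |u x s - u x' s| := by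
      have key : ∀ y, |w x' y * (γ * (g (u x s - u y s) - g (u x' s - u y s))) * f (u y s)| ≤
          (γ * Bg * |u x s - u x' s|) * |w x' y| := by
        intro y
        have hgl : |g (u x s - u y s) - g (u x' s - u y s)| ≤ Bg * |u x s - u x' s| := by
          have h := hg_lip (u x s - u y s) (u x' s - u y s)
          have e : (u x s - u y s) - (u x' s - u y s) = u x s - u x' s := by ring
          rwa [e] at h
        have hfb : |f (u y s)| ≤ 1 := by
          rw [abs_of_nonneg (hf_range _).1]; exact (hf_range _).2
        rw [abs_mul, abs_mul, abs_mul, abs_of_nonneg hγ]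
        calc |w x' y| * (γ * |g (u x s - u y s) - g (u x' s - u y s)|) * |f (u y s)|
            ≤ |w x' y| * (γ * (Bg * |u x s - u x' s|)) * 1 := by
              refine mul_le_mul (mul_le_mul_of_nonneg_left
                (mul_le_mul_of_nonneg_left hgl hγ) (abs_nonneg _)) hfb (abs_nonneg _) ?_
              positivity
          _ = (γ * Bg * |u x s - u x' s|) * |w x' y| := by ring
      have h1 : |∫ y, w x' y * (γ * (g (u x s - u y s) - g (u x' s - u y s))) * f (u y s)| ≤
          ∫ y, (γ * Bg * |u x s - u x' s|) * |w x' y| := by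
        rw [← Real.norm_eq_abs]
        refine (norm_integral_le_integral_norm _).trans ?_
        refine integral_mono I2.norm ((hw_int x').abs.const_mul _) fun y => ?_
        simpa only [Real.norm_eq_abs] using key y
      have hc : 0 ≤ γ * Bg * |u x s - u x' s| := by positivity
      calc |∫ y, w x' y * (γ * (g (u x s - u y s) - g (u x' s - u y s))) * f (u y s)|
          ≤ ∫ y, (γ * Bg * |u x s - u x' s|) * |w x' y| := h1
        _ = (γ * Bg * |u x s - u x' s|) * ∫ y, |w x' y| := integral_const_mul _ _
        _ ≤ (γ * Bg * |u x s - u x' s|) * Cw := mul_le_mul_of_nonneg_left (hw_L1 x') hc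
        _ = γ * Bg * Cw * |u x s - u x' s| := by ring
    rw [split]
    calc |(∫ y, (w x y - w x' y) * (1 + γ * g (u x s - u y s)) * f (u y s))
        + ∫ y, w x' y * (γ * (g (u x s - u y s) - g (u x' s - u y s))) * f (u y s)|
        ≤ |∫ y, (w x y - w x' y) * (1 + γ * g (u x s - u y s)) * f (u y s)|
          + |∫ y, w x' y * (γ * (g (u x s - u y s) - g (u x' s - u y s))) * f (u y s)| :=
          abs_add_le _ _
      _ ≤ (1 + γ) * (Kw * ‖x - x'‖) + γ * Bg * Cw * |u x s - u x' s| := add_le_add b1 b2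
  -- bound on F
  obtain ⟨C, hCdef⟩ : ∃ C : ℝ, C = M + (1 + γ) * Cw := ⟨_, rfl⟩
  have hC0 : 0 ≤ C := by
    rw [hCdef]
    have h0 : 0 ≤ (1 + γ) * Cw := by positivity
    linarith
  have hFb : ∀ x, ∀ s ∈ Icc (0:ℝ) ρ, |F x s| ≤ C := by
    intro x s hs
    simp only [hFdef]
    have h := abs_add_le (-(u x s)) (G x s)
    rw [abs_neg] at h
    have := hM x s hs
    have := hGb x s
    rw [hCdef]
    calc |(-(u x s) + G x s)| ≤ |u x s| + |G x s| := h
      _ ≤ M + (1 + γ) * Cw := by linarith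
  -- measurability of F x
  have hFmeas : ∀ x, Measurable (F x) := by
    intro x
    have h1 : Measurable fun p : ℝ × (Fin m → ℝ) => w x p.2 :=
      hw_meas.comp (measurable_const.prodMk measurable_snd)
    have h2 : Measurable fun p : ℝ × (Fin m → ℝ) => u x p.1 :=
      hu_meas.comp (measurable_const.prodMk measurable_fst)
    have h3 : Measurable fun p : ℝ × (Fin m → ℝ) => u p.2 p.1 :=
      hu_meas.comp (measurable_snd.prodMk measurable_fst)
    have hjoint : StronglyMeasurable
        (Function.uncurry fun (s : ℝ) (y : Fin m → ℝ) =>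
          w x y * (1 + γ * g (u x s - u y s)) * f (u y s)) := by
      exact ((h1.mul (measurable_const.add
        ((hgm.comp (h2.sub h3)).const_mul γ))).mul (hfm.comp h3)).stronglyMeasurable
    have hGmeas : Measurable fun s => G x s := by
      have := StronglyMeasurable.integral_prod_right
        (ν := (volume : Measure (Fin m → ℝ))) hjoint
      simpa only [hGdef] using this.measurable
    have hux : Measurable fun s => u x s :=
      hu_meas.comp (measurable_const.prodMk measurable_id)
    simp only [hFdef]
    exact hux.neg.add hGmeas
  -- interval integrability of F x
  have hFint : ∀ x, IntervalIntegrable (F x) volume 0 ρ := by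
    intro x
    rw [intervalIntegrable_iff_integrableOn_Ioc_of_le hρ.le]
    have hconst : IntegrableOn (fun _ : ℝ => C) (Ioc 0 ρ) volume :=
      integrableOn_const measure_Ioc_lt_top.ne
    refine Integrable.mono' hconst (hFmeas x).aestronglyMeasurable.restrict ?_
    refine (ae_restrict_iff' measurableSet_Ioc).2 (Filter.Eventually.of_forall fun s hs => ?_)
    simpa only [Real.norm_eq_abs] using hFb x s (Ioc_subset_Icc_self hs)
  have hFint' : ∀ x a b, a ∈ Icc (0:ℝ) ρ → b ∈ Icc (0:ℝ) ρ →
      IntervalIntegrable (F x) volume a b := by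
    intro x a b ha hb
    exact (hFint x).mono_set (by rw [uIcc_of_le hρ.le]; exact uIcc_subset_Icc ha hb)
  -- boundedness of Aop
  have hAb : ∀ x, ∀ t ∈ Icc (0:ℝ) ρ, |Aop w f g γ u x t| ≤ C * ρ := by
    intro x t ht
    rw [hAeq, ← Real.norm_eq_abs]
    have hb : ∀ s ∈ Set.uIoc (0:ℝ) t, ‖F x s‖ ≤ C := by
      intro s hs
      rw [uIoc_of_le ht.1] at hs
      rw [Real.norm_eq_abs]
      exact hFb x s ⟨hs.1.le, hs.2.trans ht.2⟩
    have h := intervalIntegral.norm_integral_le_of_norm_le_const hb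
    have h4 : |t - 0| ≤ ρ := by rw [sub_zero, abs_of_nonneg ht.1]; exact ht.2
    calc ‖∫ s in (0:ℝ)..t, F x s‖ ≤ C * |t - 0| := h
      _ ≤ C * ρ := mul_le_mul_of_nonneg_left h4 hC0
  -- difference estimate for F in x
  have hFdiff : ∀ x x' s, |F x s - F x' s| ≤
      (1 + γ * Bg * Cw) * |u x s - u x' s| + (1 + γ) * (Kw * ‖x - x'‖) := by
    intro x x' s
    have h1 := hGdiff x x' s
    have h2 : F x s - F x' s = -(u x s - u x' s) + (G x s - G x' s) := by
      simp only [hFdef]; ring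
    rw [h2]
    have h3 := abs_add_le (-(u x s - u x' s)) (G x s - G x' s)
    rw [abs_neg] at h3
    nlinarith [abs_nonneg (u x s - u x' s)]
  -- joint continuity
  have hcont : ContinuousOn (fun p : (Fin m → ℝ) × ℝ => Aop w f g γ u p.1 p.2)
      (univ ×ˢ Icc 0 ρ) := by
    rintro ⟨x₀, t₀⟩ hp
    have ht₀ : t₀ ∈ Icc (0:ℝ) ρ := hp.2
    rw [Metric.continuousWithinAt_iff]
    intro ε hε
    obtain ⟨D, hDdef⟩ : ∃ D : ℝ, D = 1 + γ * Bg * Cw := ⟨_, rfl⟩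
    have hD0 : 0 < D := by rw [hDdef]; positivity
    obtain ⟨T, hTdef⟩ : ∃ T : ℝ, T = ρ * ((1 + γ) * Kw) + C := ⟨_, rfl⟩
    have hT0 : 0 ≤ T := by
      rw [hTdef, hCdef]
      have h0 : 0 ≤ ρ * ((1 + γ) * Kw) := by positivity
      have h0' : 0 ≤ (1 + γ) * Cw := by positivity
      linarith
    have hρD : (0:ℝ) < ρ * D + 1 := by nlinarith [mul_pos hρ hD0]
    obtain ⟨ε₁, hε₁def⟩ : ∃ e : ℝ, e = ε / (4 * (ρ * D + 1)) := ⟨_, rfl⟩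
    have hε₁ : 0 < ε₁ := by rw [hε₁def]; exact div_pos hε (by linarith)
    -- uniform continuity of u on a compact neighbourhood
    have hKcp : IsCompact ((Metric.closedBall x₀ 1) ×ˢ Icc (0:ℝ) ρ) :=
      (isCompact_closedBall x₀ 1).prod isCompact_Icc
    have hucK : UniformContinuousOn (fun p : (Fin m → ℝ) × ℝ => u p.1 p.2)
        ((Metric.closedBall x₀ 1) ×ˢ Icc (0:ℝ) ρ) :=
      hKcp.uniformContinuousOn_of_continuous
        (hu_cont.mono (prod_mono (subset_univ _) subset_rfl))
    obtain ⟨δ₁, hδ₁, hδ₁p⟩ := Metric.uniformContinuousOn_iff.1 hucK ε₁ hε₁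
    have h4T : (0:ℝ) < 4 * T + 1 := by linarith
    obtain ⟨δ, hδdef⟩ : ∃ d : ℝ, d = min δ₁ (min 1 (ε / (4 * T + 1))) := ⟨_, rfl⟩
    have hδ0 : 0 < δ := by
      rw [hδdef]
      exact lt_min hδ₁ (lt_min one_pos (div_pos hε h4T))
    refine ⟨δ, hδ0, ?_⟩
    rintro ⟨x, t⟩ hq hdist
    rw [Prod.dist_eq, max_lt_iff] at hdist
    have ht : t ∈ Icc (0:ℝ) ρ := hq.2
    have hδδ₁ : δ ≤ δ₁ := by rw [hδdef]; exact min_le_left _ _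
    have hδ1 : δ ≤ 1 := by rw [hδdef]; exact (min_le_right _ _).trans (min_le_left _ _)
    have hδε : δ ≤ ε / (4 * T + 1) := by
      rw [hδdef]; exact (min_le_right _ _).trans (min_le_right _ _)
    have hxball : x ∈ Metric.closedBall x₀ 1 := by
      rw [Metric.mem_closedBall]
      exact (hdist.1.le).trans hδ1
    have huu : ∀ s ∈ Icc (0:ℝ) ρ, |u x s - u x₀ s| ≤ ε₁ := by
      intro s hs
      have h := hδ₁p (x, s) ⟨hxball, hs⟩ (x₀, s)
        ⟨Metric.mem_closedBall_self zero_le_one, hs⟩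
        (by
          rw [Prod.dist_eq]
          exact max_lt (hdist.1.trans_le hδδ₁) (by simpa using hδ₁))
      exact le_of_lt (by simpa [Real.dist_eq] using h)
    have hIx := hFint' x 0 t ⟨le_rfl, hρ.le⟩ ht
    have hIx₀t := hFint' x₀ 0 t ⟨le_rfl, hρ.le⟩ ht
    have hIx₀t₀ := hFint' x₀ 0 t₀ ⟨le_rfl, hρ.le⟩ ht₀
    have hcoef : 0 ≤ D * ε₁ + (1 + γ) * (Kw * δ) := by
      have h1 : 0 ≤ D * ε₁ := mul_nonneg hD0.le hε₁.le
      have h2 : 0 ≤ (1 + γ) * (Kw * δ) := mul_nonneg hγ1.le (mul_nonneg hKw.le hδ0.le)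
      linarith
    have stepA : |Aop w f g γ u x t - Aop w f g γ u x₀ t| ≤
        (D * ε₁ + (1 + γ) * (Kw * δ)) * ρ := by
      rw [hAeq, hAeq, ← intervalIntegral.integral_sub hIx hIx₀t, ← Real.norm_eq_abs]
      have hb : ∀ s ∈ Set.uIoc (0:ℝ) t, ‖F x s - F x₀ s‖ ≤ D * ε₁ + (1 + γ) * (Kw * δ) := by
        intro s hs
        rw [uIoc_of_le ht.1] at hs
        have hs' : s ∈ Icc (0:ℝ) ρ := ⟨hs.1.le, hs.2.trans ht.2⟩
        have h1 := hFdiff x x₀ s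
        have h2 := huu s hs'
        have h3 : ‖x - x₀‖ ≤ δ := by rw [← dist_eq_norm]; exact hdist.1.le
        rw [Real.norm_eq_abs, hDdef]
        have e1 : D * |u x s - u x₀ s| ≤ D * ε₁ := mul_le_mul_of_nonneg_left h2 hD0.le
        have e2 : (1 + γ) * (Kw * ‖x - x₀‖) ≤ (1 + γ) * (Kw * δ) :=
          mul_le_mul_of_nonneg_left (mul_le_mul_of_nonneg_left h3 hKw.le) hγ1.le
        rw [hDdef] at e1
        linarith
      have h := intervalIntegral.norm_integral_le_of_norm_le_const hb
      have h4 : |t - 0| ≤ ρ := by rw [sub_zero, abs_of_nonneg ht.1]; exact ht.2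
      calc ‖∫ s in (0:ℝ)..t, (F x s - F x₀ s)‖
          ≤ (D * ε₁ + (1 + γ) * (Kw * δ)) * |t - 0| := h
        _ ≤ (D * ε₁ + (1 + γ) * (Kw * δ)) * ρ := mul_le_mul_of_nonneg_left h4 hcoef
    have stepB : |Aop w f g γ u x₀ t - Aop w f g γ u x₀ t₀| ≤ C * δ := by
      rw [hAeq, hAeq, intervalIntegral.integral_interval_sub_left hIx₀t hIx₀t₀,
        ← Real.norm_eq_abs]
      have hb : ∀ s ∈ Set.uIoc t₀ t, ‖F x₀ s‖ ≤ C := by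
        intro s hs
        have hs1 : s ∈ Icc (0:ℝ) ρ :=
          (uIcc_subset_Icc ht₀ ht) (uIoc_subset_uIcc hs)
        rw [Real.norm_eq_abs]
        exact hFb x₀ s hs1
      have h := intervalIntegral.norm_integral_le_of_norm_le_const hb
      have h4 : |t - t₀| ≤ δ := by rw [← Real.dist_eq]; exact hdist.2.le
      calc ‖∫ s in t₀..t, F x₀ s‖ ≤ C * |t - t₀| := h
        _ ≤ C * δ := mul_le_mul_of_nonneg_left h4 hC0
    rw [Real.dist_eq]
    have tri : |Aop w f g γ u x t - Aop w f g γ u x₀ t₀| ≤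
        |Aop w f g γ u x t - Aop w f g γ u x₀ t| +
        |Aop w f g γ u x₀ t - Aop w f g γ u x₀ t₀| := abs_sub_le _ _ _
    have h1 : D * ε₁ * ρ ≤ ε / 4 := by
      have e : D * ε₁ * ρ = (ρ * D * ε) / (4 * (ρ * D + 1)) := by
        rw [hε₁def]; ring
      rw [e, div_le_div_iff₀ (by linarith : (0:ℝ) < 4 * (ρ * D + 1)) (by norm_num : (0:ℝ) < 4)]
      nlinarith [hε.le, hD0.le, hρ.le, mul_nonneg (mul_nonneg hρ.le hD0.le) hε.le]
    have h2 : ((1 + γ) * (Kw * δ)) * ρ + C * δ ≤ ε / 4 := by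
      have e : ((1 + γ) * (Kw * δ)) * ρ + C * δ = T * δ := by rw [hTdef]; ring
      rw [e]
      calc T * δ ≤ T * (ε / (4 * T + 1)) := mul_le_mul_of_nonneg_left hδε hT0
        _ ≤ ε / 4 := by
          have e2 : T * (ε / (4 * T + 1)) = (T * ε) / (4 * T + 1) := by ring
          rw [e2, div_le_div_iff₀ h4T (by norm_num : (0:ℝ) < 4)]
          nlinarith [hε.le, hT0, mul_nonneg hT0 hε.le]
    have expand : (D * ε₁ + (1 + γ) * (Kw * δ)) * ρ =
        D * ε₁ * ρ + ((1 + γ) * (Kw * δ)) * ρ := by ring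
    have hfin : |Aop w f g γ u x t - Aop w f g γ u x₀ t₀| ≤ ε / 4 + ε / 4 := by
      rw [expand] at stepA
      linarith
    linarith
  refine ⟨hcont, ⟨C * ρ, hAb⟩, fun x => ?_⟩
  have heq : (fun t => Aop w f g γ u x t) =
      (fun p : (Fin m → ℝ) × ℝ => Aop w f g γ u p.1 p.2) ∘ (fun t => (x, t)) := rfl
  rw [heq]
  exact hcont.comp ((continuous_const.prodMk continuous_id).continuousOn)
    (fun t ht => ⟨mem_univ x, ht⟩)
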